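/- If a finite set B of atoms supports x (i.e., every finitely-supported permutation of atoms fixing B pointwise also fixes x), and B' is another finite set supporting x, then the intersection B ∩ B' also supports x. -/

import Mathlib

/-- Atoms: a countably infinite set. -/
abbrev Atom := ℕ

/-- The subgroup of permutations of atoms with finite domain. -/
def finPermSubgroup : Subgroup (Equiv.Perm Atom) where
  carrier := {π | {a | π a ≠ a}.Finite}
  one_mem' := by simp
  mul_mem' := by
    intro π σ hπ hσ
    refine (hπ.union hσ).subset ?_
    intro a ha
    by_contra h
    simp only [Set.mem_union, Set.mem_setOf_eq, not_or, not_not, ne_eq] at h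
    apply ha
    show π (σ a) = a
    rw [h.2, h.1]
  inv_mem' := by
    intro π hπ
    refine hπ.subset ?_
    intro a ha h
    apply ha
    show π⁻¹ a = a
    conv_lhs => rw [← h]
    simp

/-- Finite-domain permutations of atoms. -/
abbrev FinPerm := ↥finPermSubgroup

/-- The transposition of two atoms, as a finite-domain permutation. -/
def fswap (a b : Atom) : FinPerm :=
  ⟨Equiv.swap a b, (Set.finite_singleton a |>.insert b).subset (by
    intro x hx
    simp only [Set.mem_setOf_eq] at hx
    by_contra h
    simp only [Set.mem_insert_iff, Set.mem_singleton_iff, not_or] at h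
    exact hx (Equiv.swap_apply_of_ne_of_ne h.2 h.1))⟩

/-- The domain of a finite-domain permutation. -/
def pdom (π : FinPerm) : Set Atom := {a | π.val a ≠ a}

section
variable {X : Type*} [MulAction FinPerm X]

/-- B supports x. -/
def Supports (B : Set Atom) (x : X) : Prop :=
  ∀ π : FinPerm, (∀ a ∈ B, π.val a = a) → π • x = x

/-- B strongly supports x. -/
def StronglySupports (B : Set Atom) (x : X) : Prop :=
  ∀ π : FinPerm, π • x = x ↔ (∀ a ∈ B, π.val a = a)

/-- The (least) support of x: intersection of all finite supporting sets. -/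
def supp (x : X) : Set Atom :=
  ⋂₀ {B : Set Atom | B.Finite ∧ Supports B x}

/-- A Perm(𝔸)-set is nominal when every element has a finite support. -/
def Nominal (X : Type*) [MulAction FinPerm X] : Prop :=
  ∀ x : X, ∃ B : Set Atom, B.Finite ∧ Supports B x

/-- A Perm(𝔸)-set is a strong nominal set when every element is strongly
supported by a finite set. -/
def StrongNominal (X : Type*) [MulAction FinPerm X] : Prop :=
  ∀ x : X, ∃ B : Set Atom, B.Finite ∧ StronglySupports B x

end

theorem stmt0 {X : Type*} [MulAction FinPerm X] (x : X) (B B' : Set Atom)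
    (hB : B.Finite) (hB' : B'.Finite)
    (hsB : Supports B x) (hsB' : Supports B' x) :
    Supports (B ∩ B') x := by
  classical
  intro π hπ
  obtain ⟨N, hN⟩ : ∃ N : ℕ, ∀ a ∈ B ∪ B' ∪ pdom π, a < N := by
    have hfin : (B ∪ B' ∪ pdom π).Finite := (hB.union hB').union π.2
    obtain ⟨m, hm⟩ := hfin.bddAbove
    exact ⟨m + 1, fun a ha => Nat.lt_succ_of_le (hm ha)⟩
  set S : Set Atom := B' \ B with hS
  have hSlt : ∀ a ∈ S, a < N := fun a ha => hN a (Or.inl (Or.inr ha.1))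
  set f : Atom → Atom := fun a =>
    if a ∈ S then a + N else if N ≤ a ∧ a - N ∈ S then a - N else a with hf
  have hfS : ∀ a ∈ S, f a = a + N := fun a ha => by simp [hf, ha]
  have hfSN : ∀ a ∈ S, f (a + N) = a := by
    intro a ha
    have h1 : a + N ∉ S := fun h => absurd (hSlt _ h) (Nat.not_lt.mpr (Nat.le_add_left N a))
    simp [hf, h1, ha]
  have hffix : ∀ a, a ∉ S → ¬(N ≤ a ∧ a - N ∈ S) → f a = a := by
    intro a h1 h2; simp [hf, h1, h2]
  have hinv : Function.Involutive f := by
    intro a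
    by_cases h1 : a ∈ S
    · rw [hfS a h1, hfSN a h1]
    · by_cases h2 : N ≤ a ∧ a - N ∈ S
      · have h3 : f a = a - N := by simp [hf, h1, h2]
        have h4 := hfS _ h2.2
        rw [h3, h4, Nat.sub_add_cancel h2.1]
      · rw [hffix a h1 h2, hffix a h1 h2]
  have hdom : {a | Function.Involutive.toPerm f hinv a ≠ a}.Finite := by
    have hsub : {a | Function.Involutive.toPerm f hinv a ≠ a} ⊆ S ∪ (fun a => a + N) '' S := by
      intro a ha
      simp only [Set.mem_setOf_eq, Function.Involutive.coe_toPerm] at ha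
      by_cases h1 : a ∈ S
      · exact Or.inl h1
      · by_cases h2 : N ≤ a ∧ a - N ∈ S
        · exact Or.inr ⟨a - N, h2.2, Nat.sub_add_cancel h2.1⟩
        · exact absurd (hffix a h1 h2) ha
    exact (((hB'.subset Set.diff_subset).union
      ((hB'.subset Set.diff_subset).image _))).subset hsub
  set σ : FinPerm := ⟨Function.Involutive.toPerm f hinv, hdom⟩ with hσ
  have hσval : ∀ a, σ.val a = f a := fun a => rfl
  have hσinv : ∀ a, (σ⁻¹ : FinPerm).val a = f a := by
    intro a
    show (Function.Involutive.toPerm f hinv)⁻¹ a = f a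
    rw [Equiv.Perm.inv_eq_iff_eq]
    exact (hinv a).symm
  have hσB : ∀ a ∈ B, σ.val a = a := by
    intro a ha
    rw [hσval]
    apply hffix
    · exact fun h => h.2 ha
    · intro h
      exact absurd (hN a (Or.inl (Or.inl ha))) (Nat.not_lt.mpr h.1)
  have hσx : σ • x = x := hsB σ hσB
  have hτ : ∀ a ∈ B', (σ * π * σ⁻¹).val a = a := by
    intro a ha
    show σ.val (π.val ((σ⁻¹ : FinPerm).val a)) = a
    rw [hσinv]
    by_cases hab : a ∈ B
    · have h1 : a ∉ S := fun h => h.2 hab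
      have h2 : ¬(N ≤ a ∧ a - N ∈ S) := fun h =>
        absurd (hN a (Or.inl (Or.inl hab))) (Nat.not_lt.mpr h.1)
      rw [hffix a h1 h2, hπ a ⟨hab, ha⟩, hσval, hffix a h1 h2]
    · have haS : a ∈ S := ⟨ha, hab⟩
      rw [hfS a haS]
      have hfix : π.val (a + N) = a + N := by
        by_contra h
        have : a + N ∈ pdom π := h
        exact absurd (hN _ (Or.inr this)) (Nat.not_lt.mpr (Nat.le_add_left N a))
      rw [hfix, hσval, hfSN a haS]
  have hτx : (σ * π * σ⁻¹) • x = x := hsB' _ hτ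
  rw [mul_smul, mul_smul] at hτx
  have hσix : (σ⁻¹ : FinPerm) • x = x := by
    rw [inv_smul_eq_iff, hσx]
  rw [hσix] at hτx
  calc π • x = σ⁻¹ • σ • π • x := by rw [inv_smul_smul]
    _ = σ⁻¹ • x := by rw [hτx]
    _ = x := hσix
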